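/- Let k be an infinite field, (A_i)_{i∈I} a family of k-algebras, B a k-algebra with dim_k(B) < card(k), and f : A = ∏_{i∈I} A_i → B a surjective k-algebra homomorphism. Then the composite homomorphism A → B → B/Z(B) factors as A → A/U_0 × … × A/U_{n-1} → B/Z(B) for some n ∈ ℕ, where U_0, …, U_{n-1} are card(k)^+-complete ultrafilters on I. -/

import Mathlib

universe u

/-- The setoid on a dependent product given by a filter. -/
def redSetoid {I : Type u} (F : Filter I) (A : I → Type u) : Setoid (∀ i, A i) where
  r a b := {i | a i = b i} ∈ F
  iseqv := by
    refine ⟨fun a => ?_, fun {a b} h => ?_, fun {a b c} h₁ h₂ => ?_⟩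
    · simp
    · simpa [eq_comm] using h
    · exact Filter.mem_of_superset (Filter.inter_mem h₁ h₂)
        (fun i hi => hi.1.trans hi.2)

/-- The reduced product of a family of sets with respect to a filter. -/
def ReducedProduct {I : Type u} (F : Filter I) (A : I → Type u) : Type u :=
  Quotient (redSetoid F A)

/-- The canonical quotient map onto a reduced product. -/
def reducedMk {I : Type u} (F : Filter I) (A : I → Type u) (a : ∀ i, A i) :
    ReducedProduct F A :=
  Quotient.mk (redSetoid F A) a

/-- A filter is `κ`-complete if it is closed under intersections of
families of fewer than `κ` of its members. -/
def KappaComplete {I : Type u} (κ : Cardinal.{u}) (F : Filter I) : Prop :=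
  ∀ 𝒮 : Set (Set I), Cardinal.mk 𝒮 < κ → (∀ s ∈ 𝒮, s ∈ F) → ⋂₀ 𝒮 ∈ F

/-- The total annihilator ideal `Z(B) = {x | xB = Bx = 0}` of a (nonunital,
nonassociative) `k`-algebra, as a `k`-submodule. -/
def totalAnnihilator (k : Type u) (B : Type u) [Field k]
    [NonUnitalNonAssocRing B] [Module k B] [SMulCommClass k B B]
    [IsScalarTower k B B] : Submodule k B where
  carrier := {x | ∀ y : B, x * y = 0 ∧ y * x = 0}
  zero_mem' := fun y => ⟨zero_mul y, mul_zero y⟩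
  add_mem' := by
    intro a b ha hb y
    exact ⟨by rw [add_mul, (ha y).1, (hb y).1, add_zero],
           by rw [mul_add, (ha y).2, (hb y).2, add_zero]⟩
  smul_mem' := by
    intro c x hx y
    exact ⟨by rw [smul_mul_assoc, (hx y).1, smul_zero],
           by rw [mul_smul_comm, (hx y).2, smul_zero]⟩

noncomputable section BNproof

open Classical

set_option linter.unusedSectionVars false

variable {k : Type u} [Field k] {I : Type u} {A : I → Type u}
  [∀ i, NonUnitalNonAssocRing (A i)] [∀ i, Module k (A i)]
  [∀ i, SMulCommClass k (A i) (A i)] [∀ i, IsScalarTower k (A i) (A i)]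
  {B : Type u} [NonUnitalNonAssocRing B] [Module k B] [SMulCommClass k B B]
  [IsScalarTower k B B]

lemma mem_tA {x : B} : x ∈ totalAnnihilator k B ↔ ∀ y : B, x * y = 0 ∧ y * x = 0 :=
  Iff.rfl

/-- `S` is null if every element supported in `S` maps into the total annihilator. -/
def NullS (f : (∀ i, A i) →ₙₐ[k] B) (S : Set I) : Prop :=
  ∀ a : ∀ i, A i, (∀ i, i ∉ S → a i = 0) → f a ∈ totalAnnihilator k B

variable {f : (∀ i, A i) →ₙₐ[k] B}

lemma nullS_mono {S T : Set I} (h : S ⊆ T) (hT : NullS f T) : NullS f S :=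
  fun a ha => hT a fun i hi => ha i fun hi' => hi (h hi')

lemma nullS_empty : NullS f (∅ : Set I) := by
  intro a ha
  have : a = 0 := funext fun i => ha i (by simp)
  rw [this, map_zero]
  exact zero_mem _

lemma NullS.union {S T : Set I} (hS : NullS f S) (hT : NullS f T) :
    NullS f (S ∪ T) := by
  intro a ha
  have hsplit : a = (fun i => if i ∈ S then a i else 0)
      + fun i => if i ∈ S then 0 else a i := by
    funext i; by_cases h : i ∈ S <;> simp [h]
  rw [hsplit, map_add]
  refine add_mem (hS _ fun i hi => by simp [hi]) (hT _ fun i hi => ?_)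
  by_cases h : i ∈ S
  · simp [h]
  · simp only [h, if_false]
    exact ha i (by simp [h, hi])

lemma null_finite_sUnion (𝒮 : Set (Set I)) (hfin : 𝒮.Finite) :
    (∀ T ∈ 𝒮, NullS f T) → NullS f (⋃₀ 𝒮) := by
  refine Set.Finite.induction_on
    (motive := fun 𝒮 _ => (∀ T ∈ 𝒮, NullS f T) → NullS f (⋃₀ 𝒮)) 𝒮 hfin ?_ ?_
  · intro _; simpa using (nullS_empty (f := f))
  · intro T 𝒮' _ _ ih h
    rw [Set.sUnion_insert]
    exact (h T (Set.mem_insert _ _)).union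
      (ih fun T' hT' => h T' (Set.mem_insert_of_mem _ hT'))

/-- Key splitting lemma: if `p` is supported in `S`, `p'` supported outside `S`,
and `f p - f p'` annihilates, then `f p` annihilates. -/
lemma lemA (hf : Function.Surjective f) {S : Set I} {p p' : ∀ i, A i}
    (hp : ∀ i, i ∉ S → p i = 0) (hp' : ∀ i, i ∈ S → p' i = 0)
    (hZ : f p - f p' ∈ totalAnnihilator k B) : f p ∈ totalAnnihilator k B := by
  rw [mem_tA]
  intro y
  obtain ⟨c, rfl⟩ := hf y
  set c₁ : ∀ i, A i := fun i => if i ∈ S then c i else 0 with hc₁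
  set c₂ : ∀ i, A i := fun i => if i ∈ S then 0 else c i with hc₂
  have hc : c = c₁ + c₂ := by
    funext i; by_cases h : i ∈ S <;> simp [hc₁, hc₂, h]
  have hpc₂ : p * c₂ = 0 := by
    funext i; by_cases h : i ∈ S
    · simp [hc₂, h]
    · show p i * c₂ i = 0
      rw [hp i h, zero_mul]
  have hc₂p : c₂ * p = 0 := by
    funext i; by_cases h : i ∈ S
    · simp [hc₂, h]
    · show c₂ i * p i = 0
      rw [hp i h, mul_zero]
  have hp'c₁ : p' * c₁ = 0 := by
    funext i; by_cases h : i ∈ S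
    · show p' i * c₁ i = 0
      rw [hp' i h, zero_mul]
    · simp [hc₁, h]
  have hc₁p' : c₁ * p' = 0 := by
    funext i; by_cases h : i ∈ S
    · show c₁ i * p' i = 0
      rw [hp' i h, mul_zero]
    · simp [hc₁, h]
  constructor
  · have e2 : f p * f c₂ = 0 := by rw [← map_mul, hpc₂, map_zero]
    have e1 : f p * f c₁ = 0 := by
      have h0 := (mem_tA.mp hZ (f c₁)).1
      rw [sub_mul] at h0
      rw [sub_eq_zero.mp h0, ← map_mul, hp'c₁, map_zero]
    calc f p * f c = f p * f c₁ + f p * f c₂ := by rw [hc, map_add, mul_add]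
    _ = 0 := by rw [e1, e2, add_zero]
  · have e2 : f c₂ * f p = 0 := by rw [← map_mul, hc₂p, map_zero]
    have e1 : f c₁ * f p = 0 := by
      have h0 := (mem_tA.mp hZ (f c₁)).2
      rw [mul_sub] at h0
      rw [sub_eq_zero.mp h0, ← map_mul, hc₁p', map_zero]
    calc f c * f p = f c₁ * f p + f c₂ * f p := by rw [hc, map_add, add_mul]
    _ = 0 := by rw [e1, e2, add_zero]

section Scaling

variable {J : Type*}

/-- Rescale `a` by `ε (ν i)` in coordinate `i`. -/
def sc (ν : I → J) (ε : J → k) (a : ∀ i, A i) : ∀ i, A i := fun i => ε (ν i) • a i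

lemma sc_one (ν : I → J) (a : ∀ i, A i) : sc ν (fun _ => (1 : k)) a = a := by
  funext i; simp [sc]

lemma sc_add (ν : I → J) (ε ε' : J → k) (a : ∀ i, A i) :
    sc ν (fun j => ε j + ε' j) a = sc ν ε a + sc ν ε' a := by
  funext i; simp [sc, add_smul]

lemma sc_sum (ν : I → J) (s : Finset k) (g : k → k) (ε : k → J → k) (a : ∀ i, A i) :
    (∑ x ∈ s, g x • sc ν (ε x) a) = sc ν (fun j => ∑ x ∈ s, g x * ε x j) a := by
  funext i
  simp only [Finset.sum_apply, Pi.smul_apply, sc, smul_smul]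
  rw [← Finset.sum_smul]

lemma sc_mul_right (ν : I → J) (ε ε' : J → k) (a c : ∀ i, A i) :
    sc ν (fun j => ε j * ε' j) a * c = sc ν ε a * sc ν ε' c := by
  funext i
  show (ε (ν i) * ε' (ν i)) • a i * c i = (ε (ν i) • a i) * (ε' (ν i) • c i)
  rw [smul_mul_smul_comm, smul_mul_assoc]

lemma sc_mul_left (ν : I → J) (ε ε' : J → k) (a c : ∀ i, A i) :
    c * sc ν (fun j => ε j * ε' j) a = sc ν ε' c * sc ν ε a := by
  funext i
  show c i * ((ε (ν i) * ε' (ν i)) • a i) = (ε' (ν i) • c i) * (ε (ν i) • a i)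
  rw [smul_mul_smul_comm, mul_comm (ε' (ν i)), mul_smul_comm]

/-- The set of scalings sending `a` into the annihilator is closed under
pointwise multiplication by arbitrary scalings. -/
lemma sc_mem_mul (hf : Function.Surjective f) (ν : I → J) {ε : J → k} (ε' : J → k)
    (a : ∀ i, A i) (h : f (sc ν ε a) ∈ totalAnnihilator k B) :
    f (sc ν (fun j => ε j * ε' j) a) ∈ totalAnnihilator k B := by
  rw [mem_tA]
  intro y
  obtain ⟨c, rfl⟩ := hf y
  constructor
  · rw [← map_mul, sc_mul_right, map_mul]
    exact (mem_tA.mp h (f (sc ν ε' c))).1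
  · rw [← map_mul, sc_mul_left, map_mul]
    exact (mem_tA.mp h (f (sc ν ε' c))).2

end Scaling

/-- Vandermonde-type fact: if all power sums vanish, the coefficients vanish. -/
lemma vand1 (s : Finset k) : ∀ g : k → k,
    (∀ n : ℕ, ∑ x ∈ s, g x * x ^ n = 0) → ∀ x ∈ s, g x = 0 := by
  induction s using Finset.induction with
  | empty => intro g _ x hx; simp at hx
  | @insert x₀ s hx₀ ih =>
      intro g h
      have hs : ∀ n : ℕ, ∑ x ∈ s, g x * x ^ n = -(g x₀ * x₀ ^ n) := by
        intro n
        have := h n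
        rw [Finset.sum_insert hx₀] at this
        exact eq_neg_of_add_eq_zero_right this
      have hg' : ∀ x ∈ s, g x * (x - x₀) = 0 := by
        apply ih
        intro n
        have he : ∀ x ∈ s, g x * (x - x₀) * x ^ n
            = g x * x ^ (n + 1) - x₀ * (g x * x ^ n) := fun x _ => by ring
        rw [Finset.sum_congr rfl he, Finset.sum_sub_distrib, ← Finset.mul_sum, hs, hs]
        ring
      have hz : ∀ x ∈ s, g x = 0 := by
        intro x hx
        have hxne : x - x₀ ≠ 0 := sub_ne_zero.mpr (fun hxx => hx₀ (hxx ▸ hx))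
        rcases mul_eq_zero.mp (hg' x hx) with h' | h'
        · exact h'
        · exact absurd h' hxne
      intro x hx
      rcases Finset.mem_insert.mp hx with rfl | hx'
      · have := h 0
        rw [Finset.sum_insert hx₀] at this
        simp only [pow_zero, mul_one] at this
        rw [Finset.sum_eq_zero (fun x hx => by simp [hz x hx])] at this
        simpa using this
      · exact hz x hx'

/-- Vandermonde-type fact for simple fractions: a nontrivial combination of
`w ↦ (w - z)⁻¹` has finitely many zeros. -/
lemma vand2 (s : Finset k) (g : k → k) (z₀ : k) (hz₀ : z₀ ∈ s) (hg : g z₀ ≠ 0) :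
    {w : k | ∑ z ∈ s, g z * (if w = z then 0 else (w - z)⁻¹) = 0}.Finite := by
  set P : Polynomial k :=
    ∑ z ∈ s, Polynomial.C (g z) * ∏ z' ∈ s.erase z, (Polynomial.X - Polynomial.C z') with hP
  have hPne : P ≠ 0 := by
    intro h0
    have he : P.eval z₀ = 0 := by rw [h0]; simp
    rw [hP] at he
    simp only [Polynomial.eval_finset_sum, Polynomial.eval_mul, Polynomial.eval_C,
      Polynomial.eval_prod, Polynomial.eval_sub, Polynomial.eval_X] at he
    rw [Finset.sum_eq_single z₀ (fun z hz hne => ?_) (fun h => absurd hz₀ h)] at he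
    · refine hg ?_
      have hprod : ∏ z' ∈ s.erase z₀, (z₀ - z') ≠ 0 := by
        rw [Finset.prod_ne_zero_iff]
        intro z' hz'
        exact sub_ne_zero.mpr (Ne.symm (Finset.mem_erase.mp hz').1)
      exact (mul_eq_zero.mp he).resolve_right hprod
    · have : z₀ ∈ s.erase z := Finset.mem_erase.mpr ⟨fun h => hne h.symm, hz₀⟩
      rw [Finset.prod_eq_zero this (by rw [sub_self])]
      ring
  apply Set.Finite.subset ((Polynomial.finite_setOf_isRoot hPne).union s.finite_toSet)
  intro w hw
  by_cases hws : w ∈ (s : Set k)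
  · exact Or.inr hws
  · left
    show P.IsRoot w
    have hwz : ∀ z ∈ s, w - z ≠ 0 := fun z hz =>
      sub_ne_zero.mpr (fun h => hws (by rw [h]; exact hz))
    have hsum : ∑ z ∈ s, g z * (w - z)⁻¹ = 0 := by
      have := hw
      simp only [Set.mem_setOf_eq] at this
      rw [← this]
      apply Finset.sum_congr rfl
      intro z hz
      rw [if_neg (fun h => hws (by rw [h]; exact hz))]
    show P.eval w = 0
    rw [hP]
    simp only [Polynomial.eval_finset_sum, Polynomial.eval_mul, Polynomial.eval_C,
      Polynomial.eval_prod, Polynomial.eval_sub, Polynomial.eval_X]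
    have hterm : ∀ z ∈ s, g z * ∏ z' ∈ s.erase z, (w - z')
        = (g z * (w - z)⁻¹) * ∏ z' ∈ s, (w - z') := by
      intro z hz
      rw [← Finset.mul_prod_erase s _ hz, ← mul_assoc, mul_assoc (g z),
        inv_mul_cancel₀ (hwz z hz), mul_one]
    rw [Finset.sum_congr rfl hterm, ← Finset.sum_mul, hsum, zero_mul]

/-- From a linear dependence of the images in `B ⧸ Z`, membership of the
combined scaling in the annihilator. -/
lemma dep_mem {J : Type*} (ν : I → J) (a : ∀ i, A i) (s : Finset k) (g : k → k)
    (ε : k → J → k)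
    (hsum : ∑ x ∈ s, g x • (Submodule.Quotient.mk (f (sc ν (ε x) a)) :
      B ⧸ totalAnnihilator k B) = 0) :
    f (sc ν (fun j => ∑ x ∈ s, g x * ε x j) a) ∈ totalAnnihilator k B := by
  rw [← sc_sum, ← Submodule.Quotient.mk_eq_zero, map_sum, ← hsum, ← Submodule.mkQ_apply,
    map_sum]
  apply Finset.sum_congr rfl
  intro x _
  rw [Submodule.mkQ_apply, map_smul, Submodule.Quotient.mk_smul]

/-- There is no countably infinite pairwise disjoint family of non-null sets. -/
lemma no_inf_antichain [Infinite k] (hf : Function.Surjective f)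
    (hB : Module.rank k B < Cardinal.mk k) (S : ℕ → Set I)
    (hdisj : ∀ m n, m ≠ n → Disjoint (S m) (S n))
    (hpos : ∀ n, ¬ NullS f (S n)) : False := by
  have hex : ∀ n, ∃ a : ∀ i, A i,
      (∀ i, i ∉ S n → a i = 0) ∧ f a ∉ totalAnnihilator k B := by
    intro n
    by_contra h
    push_neg at h
    exact hpos n fun a ha => h a ha
  choose aa haa hZa using hex
  have hch : ∀ n i, i ∈ S n → ∀ (hex' : ∃ m, i ∈ S m), hex'.choose = n := by
    intro n i hi hex'
    by_contra hne
    exact Set.disjoint_left.mp (hdisj _ _ hne) hex'.choose_spec hi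
  let ν : I → ℕ := fun i => if h : ∃ n, i ∈ S n then h.choose else 0
  let a : ∀ i, A i := fun i => if h : ∃ n, i ∈ S n then aa h.choose i else 0
  have hν : ∀ n i, i ∈ S n → ν i = n := by
    intro n i hi
    have hex' : ∃ m, i ∈ S m := ⟨n, hi⟩
    show (if h : ∃ n, i ∈ S n then h.choose else 0) = n
    rw [dif_pos hex', hch n i hi hex']
  have ha : ∀ n i, i ∈ S n → a i = aa n i := by
    intro n i hi
    have hex' : ∃ m, i ∈ S m := ⟨n, hi⟩
    show (if h : ∃ n, i ∈ S n then aa h.choose i else 0) = aa n i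
    rw [dif_pos hex']
    congr 1
    exact hch n i hi hex'
  let V : k → (B ⧸ totalAnnihilator k B) :=
    fun x => Submodule.Quotient.mk (f (sc ν (fun n : ℕ => x ^ n) a))
  have hli : ¬ LinearIndependent k V := by
    intro h
    exact absurd (h.cardinal_le_rank.trans (rank_quotient_le _)) (not_le.mpr hB)
  rw [linearIndependent_iff'] at hli
  push_neg at hli
  obtain ⟨s, g, hsum, x₀, hx₀s, hgx₀⟩ := hli
  have hfw : f (sc ν (fun n => ∑ x ∈ s, g x * x ^ n) a) ∈ totalAnnihilator k B :=
    dep_mem ν a s g _ hsum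
  obtain ⟨n₀, hn₀⟩ : ∃ n, (∑ x ∈ s, g x * x ^ n) ≠ 0 := by
    by_contra h
    push_neg at h
    exact hgx₀ (vand1 s g h x₀ hx₀s)
  set q : ℕ → k := fun n => ∑ x ∈ s, g x * x ^ n with hqdef
  set w : ∀ i, A i := sc ν q a with hwdef
  set p : ∀ i, A i := (fun i => if i ∈ S n₀ then w i else 0) with hpdef
  set p' : ∀ i, A i := (fun i => if i ∈ S n₀ then 0 else w i) with hp'def
  have hfp : f p ∈ totalAnnihilator k B := by
    apply lemA hf (S := S n₀) (p' := -p')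
    · intro i hi
      simp only [hpdef, if_neg hi]
    · intro i hi
      simp only [hp'def, Pi.neg_apply, if_pos hi, neg_zero]
    · have hw : w = p + p' := by
        funext i
        by_cases h : i ∈ S n₀ <;> simp [hpdef, hp'def, h]
      rw [map_neg, sub_neg_eq_add, ← map_add, ← hw]
      exact hfw
  have hpval : p = q n₀ • aa n₀ := by
    funext i
    by_cases h : i ∈ S n₀
    · simp only [hpdef, if_pos h]
      show q (ν i) • a i = (q n₀ • aa n₀) i
      rw [hν n₀ i h, ha n₀ i h]
      rfl
    · simp only [hpdef, if_neg h]
      show (0 : A i) = (q n₀ • aa n₀) i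
      show (0 : A i) = q n₀ • aa n₀ i
      rw [haa n₀ i h, smul_zero]
  rw [hpval, map_smul] at hfp
  exact hZa n₀ ((Submodule.smul_mem_iff _ hn₀).mp hfp)

/-- Key completeness lemma: a union of at most `card k` null sets is null. -/
lemma null_sUnion [Infinite k] (hf : Function.Surjective f)
    (hB : Module.rank k B < Cardinal.mk k) (𝒮 : Set (Set I))
    (hN : ∀ T ∈ 𝒮, NullS f T) (hc : Cardinal.mk ↥𝒮 ≤ Cardinal.mk k) :
    NullS f (⋃₀ 𝒮) := by
  intro a ha
  by_contra hZ
  have hcard : Cardinal.mk (Option ↥𝒮) ≤ Cardinal.mk k := by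
    rw [Cardinal.mk_option]
    calc Cardinal.mk ↥𝒮 + 1 ≤ Cardinal.mk k + 1 := add_le_add hc le_rfl
    _ = Cardinal.mk k := Cardinal.add_one_eq (Cardinal.infinite_iff.mp ‹Infinite k›)
  obtain ⟨y⟩ : Nonempty (Option ↥𝒮 ↪ k) := by
    rw [← Cardinal.le_def]
    exact hcard
  let ν : I → Option ↥𝒮 :=
    fun i => if h : ∃ T : ↥𝒮, i ∈ (T : Set I) then some h.choose else none
  have hνT : ∀ (T : ↥𝒮) i, ν i = some T → i ∈ (T : Set I) := by
    intro T i h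
    by_cases hex : ∃ T' : ↥𝒮, i ∈ (T' : Set I)
    · have h' : (some hex.choose : Option ↥𝒮) = some T := by
        rw [← h]; show _ = ν i; simp only [ν, dif_pos hex]
      rw [Option.some_inj] at h'
      exact h' ▸ hex.choose_spec
    · exfalso
      have : ν i = none := by simp only [ν, dif_neg hex]
      rw [this] at h
      cases h
  have hνnone : ∀ i, ν i = none → a i = 0 := by
    intro i h
    apply ha
    intro hmem
    obtain ⟨T, hT, hiT⟩ := hmem
    have hex : ∃ T' : ↥𝒮, i ∈ (T' : Set I) := ⟨⟨T, hT⟩, hiT⟩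
    have : ν i = some hex.choose := by simp only [ν, dif_pos hex]
    rw [this] at h
    cases h
  have hfinZ : ∀ ε : Option ↥𝒮 → k, {j | ε j ≠ 0}.Finite →
      f (sc ν ε a) ∈ totalAnnihilator k B := by
    intro ε hfin
    have hTfin : {T : ↥𝒮 | ε (some T) ≠ 0}.Finite := by
      have heq : {T : ↥𝒮 | ε (some T) ≠ 0}
          = (fun T : ↥𝒮 => (some T : Option ↥𝒮)) ⁻¹' {j | ε j ≠ 0} := rfl
      rw [heq]
      exact hfin.preimage ((Option.some_injective _).injOn)
    have hnull : NullS f (⋃₀ ((fun T : ↥𝒮 => (T : Set I)) '' {T | ε (some T) ≠ 0})) :=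
      null_finite_sUnion _ (hTfin.image _) (by
        rintro T' ⟨T, _, rfl⟩
        exact hN _ T.2)
    apply hnull
    intro i hi
    show ε (ν i) • a i = 0
    cases hn : ν i with
    | none => rw [hνnone i hn, smul_zero]
    | some T =>
        by_cases hε : ε (some T) = 0
        · rw [hε, zero_smul]
        · refine absurd (Set.mem_sUnion.mpr ?_) hi
          exact ⟨(T : Set I), Set.mem_image_of_mem _ hε, hνT T i hn⟩
  let hzf : k → Option ↥𝒮 → k := fun z j => if y j = z then 0 else (y j - z)⁻¹
  let V : k → (B ⧸ totalAnnihilator k B) :=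
    fun z => Submodule.Quotient.mk (f (sc ν (hzf z) a))
  have hli : ¬ LinearIndependent k V := by
    intro h
    exact absurd (h.cardinal_le_rank.trans (rank_quotient_le _)) (not_le.mpr hB)
  rw [linearIndependent_iff'] at hli
  push_neg at hli
  obtain ⟨s, g, hsum, z₀, hz₀s, hgz₀⟩ := hli
  have hfq : f (sc ν (fun j => ∑ z ∈ s, g z * hzf z j) a) ∈ totalAnnihilator k B :=
    dep_mem ν a s g _ hsum
  set q : Option ↥𝒮 → k := fun j => ∑ z ∈ s, g z * hzf z j with hqdef
  have hzfin : {j | q j = 0}.Finite := by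
    have hsub : {j | q j = 0} ⊆
        y ⁻¹' {w | ∑ z ∈ s, g z * (if w = z then 0 else (w - z)⁻¹) = 0} :=
      fun j hj => hj
    exact (((vand2 s g z₀ hz₀s hgz₀).preimage y.injective.injOn)).subset hsub
  have h1 : f (sc ν (fun j => q j * (q j)⁻¹ + (if q j = 0 then 1 else 0)) a)
      ∈ totalAnnihilator k B := by
    rw [sc_add, map_add]
    refine add_mem (sc_mem_mul hf ν (fun j => (q j)⁻¹) a hfq) (hfinZ _ ?_)
    refine hzfin.subset (fun j hj => ?_)
    by_cases h : q j = 0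
    · exact h
    · simp [h] at hj
  have hone : f a ∈ totalAnnihilator k B := by
    have heq : (fun j => q j * (q j)⁻¹ + (if q j = 0 then 1 else 0))
        = fun _ : Option ↥𝒮 => (1 : k) := by
      funext j
      by_cases h : q j = 0
      · simp [h]
      · simp [h, mul_inv_cancel₀ h]
    rw [heq, sc_one] at h1
    exact h1
  exact hZ hone

/-- An "ultra" set: non-null, and every subset splits it into a null and a co-null part. -/
def UltraS (f : (∀ i, A i) →ₙₐ[k] B) (S : Set I) : Prop :=
  ¬ NullS f S ∧ ∀ T : Set I, NullS f (S ∩ T) ∨ NullS f (S \ T)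

lemma exists_ultra [Infinite k] (hf : Function.Surjective f)
    (hB : Module.rank k B < Cardinal.mk k) {S₀ : Set I} (hS₀ : ¬ NullS f S₀) :
    ∃ T, T ⊆ S₀ ∧ UltraS f T := by
  by_contra hno
  push_neg at hno
  have hsplit : ∀ T : Set I, T ⊆ S₀ → ¬ NullS f T →
      ∃ W : Set I, ¬ NullS f (T ∩ W) ∧ ¬ NullS f (T \ W) := by
    intro T hT hTn
    by_contra h
    push_neg at h
    exact (hno T hT) ⟨hTn, fun W => or_iff_not_imp_left.mpr (h W)⟩
  let Pos := {T : Set I // T ⊆ S₀ ∧ ¬ NullS f T}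
  let step : Pos → Pos := fun T =>
    ⟨T.1 \ (hsplit T.1 T.2.1 T.2.2).choose,
      Set.diff_subset.trans T.2.1, (hsplit T.1 T.2.1 T.2.2).choose_spec.2⟩
  let D : ℕ → Pos := fun n => Nat.recAux ⟨S₀, subset_rfl, hS₀⟩ (fun _ p => step p) n
  let W : ℕ → Set I := fun n => (hsplit (D n).1 (D n).2.1 (D n).2.2).choose
  let Q : ℕ → Set I := fun n => (D n).1 ∩ W n
  have hQpos : ∀ n, ¬ NullS f (Q n) :=
    fun n => (hsplit (D n).1 (D n).2.1 (D n).2.2).choose_spec.1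
  have hDsucc : ∀ n, (D (n + 1)).1 = (D n).1 \ W n := fun n => rfl
  have hmono : ∀ n m, (D (n + m)).1 ⊆ (D n).1 := by
    intro n m
    induction m with
    | zero => exact subset_rfl
    | succ m ih =>
        have : (D (n + (m + 1))).1 = (D (n + m)).1 \ W (n + m) := hDsucc (n + m)
        rw [this]
        exact Set.diff_subset.trans ih
  have hdisj' : ∀ m n, m < n → Disjoint (Q m) (Q n) := by
    intro m n hmn
    rw [Set.disjoint_left]
    intro x hxm hxn
    have h1 : x ∈ W m := hxm.2
    have h2 : x ∈ (D n).1 := hxn.1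
    have h3 : (D n).1 ⊆ (D (m + 1)).1 := by
      obtain ⟨d, rfl⟩ := Nat.exists_eq_add_of_le hmn
      exact hmono (m + 1) d
    have := (hDsucc m ▸ h3 h2).2
    exact this h1
  apply no_inf_antichain hf hB Q ?_ hQpos
  intro m n hmn
  rcases lt_or_gt_of_ne hmn with h | h
  · exact hdisj' m n h
  · exact (hdisj' n m h).symm

lemma max_family [Infinite k] (hf : Function.Surjective f)
    (hB : Module.rank k B < Cardinal.mk k) :
    ∃ 𝒜 : Set (Set I), (∀ S ∈ 𝒜, UltraS f S) ∧ 𝒜.Pairwise Disjoint ∧ 𝒜.Finite ∧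
      NullS f (⋃₀ 𝒜)ᶜ := by
  have hzorn : ∀ c ⊆ {𝒞 : Set (Set I) | (∀ S ∈ 𝒞, UltraS f S) ∧ 𝒞.Pairwise Disjoint},
      IsChain (fun x1 x2 => x1 ⊆ x2) c →
      ∃ ub ∈ {𝒞 : Set (Set I) | (∀ S ∈ 𝒞, UltraS f S) ∧ 𝒞.Pairwise Disjoint},
        ∀ s ∈ c, s ⊆ ub := by
    intro c hc hchain
    refine ⟨⋃₀ c, ⟨?_, ?_⟩, fun s hs => Set.subset_sUnion_of_mem hs⟩
    · rintro S ⟨𝒞, h𝒞c, hS⟩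
      exact (hc h𝒞c).1 S hS
    · intro S hS S' hS' hne
      obtain ⟨𝒞, h𝒞, hS⟩ := hS
      obtain ⟨𝒞', h𝒞', hS'⟩ := hS'
      rcases eq_or_ne 𝒞 𝒞' with rfl | hne'
      · exact (hc h𝒞).2 hS hS' hne
      · rcases hchain h𝒞 h𝒞' hne' with hsub | hsub
        · exact (hc h𝒞').2 (hsub hS) hS' hne
        · exact (hc h𝒞).2 hS (hsub hS') hne
  obtain ⟨𝒜, h𝒜⟩ := zorn_subset
    {𝒞 : Set (Set I) | (∀ S ∈ 𝒞, UltraS f S) ∧ 𝒞.Pairwise Disjoint} hzorn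
  have hprop := h𝒜.1
  have hfin : 𝒜.Finite := by
    by_contra hinf
    have e := Set.Infinite.natEmbedding 𝒜 hinf
    apply no_inf_antichain hf hB (fun n => (e n : Set I))
    · intro m n hmn
      have hne : ((e m : Set I)) ≠ (e n : Set I) := by
        intro h
        exact hmn (e.injective (Subtype.ext h) ▸ rfl)
      exact hprop.2 (e m).2 (e n).2 hne
    · intro n
      exact (hprop.1 _ (e n).2).1
  refine ⟨𝒜, hprop.1, hprop.2, hfin, ?_⟩
  by_contra hpos
  obtain ⟨T, hTsub, hTu⟩ := exists_ultra hf hB hpos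
  have hTne : T ∉ 𝒜 := by
    intro hT
    have h1 : T ⊆ ⋃₀ 𝒜 := Set.subset_sUnion_of_mem hT
    have h2 : T = ∅ := by
      apply Set.eq_empty_of_subset_empty
      intro x hx
      exact (hTsub hx) (h1 hx)
    exact hTu.1 (h2 ▸ nullS_empty)
  have hins : insert T 𝒜 ∈
      {𝒞 : Set (Set I) | (∀ S ∈ 𝒞, UltraS f S) ∧ 𝒞.Pairwise Disjoint} := by
    constructor
    · rintro S (rfl | hS)
      · exact hTu
      · exact hprop.1 S hS
    · rw [Set.pairwise_insert_of_symm]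
      refine ⟨hprop.2, fun S hS _ => ?_⟩
      exact Set.disjoint_left.mpr fun x hxT hxS =>
        (hTsub hxT) (Set.subset_sUnion_of_mem hS hxS)
  have := h𝒜.2 hins (Set.subset_insert _ _)
  exact hTne (this (Set.mem_insert _ _))

/-- The ultrafilter associated to an ultra set. -/
def ultraOf (f : (∀ i, A i) →ₙₐ[k] B) (S : Set I) (hS : UltraS f S) : Ultrafilter I :=
  Ultrafilter.ofComplNotMemIff
    { sets := {T | NullS f (S \ T)}
      univ_sets := by
        show NullS f (S \ Set.univ)
        rw [Set.diff_univ]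
        exact nullS_empty
      sets_of_superset := by
        intro T T' hT hsub
        exact nullS_mono (Set.diff_subset_diff_right hsub) hT
      inter_sets := by
        intro T T' hT hT'
        refine nullS_mono ?_ (hT.union hT')
        intro i hi
        rcases Classical.em (i ∈ T) with h | h
        · exact Or.inr ⟨hi.1, fun hT' => hi.2 ⟨h, hT'⟩⟩
        · exact Or.inl ⟨hi.1, h⟩ }
    (by
      intro T
      show ¬ NullS f (S \ Tᶜ) ↔ NullS f (S \ T)
      rw [Set.diff_compl]
      constructor
      · intro h
        rcases hS.2 T with h' | h'
        · exact absurd h' h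
        · exact h'
      · intro h hcon
        apply hS.1
        have : S = (S ∩ T) ∪ (S \ T) := (Set.inter_union_diff S T).symm
        rw [this]
        exact hcon.union h)

lemma mem_ultraOf {S : Set I} {hS : UltraS f S} {T : Set I} :
    T ∈ (ultraOf f S hS : Filter I) ↔ NullS f (S \ T) := Iff.rfl

end BNproof

/-- Let `k` be an infinite field, `B` a (nonunital,
nonassociative) `k`-algebra with `dim_k B < card k`, and
`f : A = ∏ᵢ Aᵢ → B` a surjective `k`-algebra homomorphism.  Then the composite
`A → B → B/Z(B)` factors through the natural map
`A → A/U 0 × … × A/U (n-1)` for some finitely many `card(k)⁺`-complete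
ultrafilters `U 0, …, U (n-1)` on `I`. -/
theorem composite_factors_through_succ_card_complete_ultraproducts
    (k : Type u) [Field k] [Infinite k] {I : Type u} (A : I → Type u)
    [∀ i, NonUnitalNonAssocRing (A i)] [∀ i, Module k (A i)]
    [∀ i, SMulCommClass k (A i) (A i)] [∀ i, IsScalarTower k (A i) (A i)]
    (B : Type u) [NonUnitalNonAssocRing B] [Module k B] [SMulCommClass k B B]
    [IsScalarTower k B B] (hB : Module.rank k B < Cardinal.mk k)
    (f : (∀ i, A i) →ₙₐ[k] B) (hf : Function.Surjective f) :
    ∃ (n : ℕ) (U : Fin n → Ultrafilter I),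
      (∀ m, KappaComplete (Order.succ (Cardinal.mk k)) (U m : Filter I)) ∧
      ∃ g : (∀ m, ReducedProduct (U m : Filter I) A) → B ⧸ totalAnnihilator k B,
        (fun a => Submodule.Quotient.mk (f a) : (∀ i, A i) → B ⧸ totalAnnihilator k B)
          = g ∘ fun (a : ∀ i, A i) (m : Fin n) => reducedMk (U m : Filter I) A a := by

  classical
  obtain ⟨𝒜, hUlt, _hPair, hfin, hcompl⟩ := max_family hf hB
  set n := hfin.toFinset.card with hn
  let eqv := hfin.toFinset.equivFin
  let Sm : Fin n → Set I := fun m => (eqv.symm m).1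
  have hSm𝒜 : ∀ m, Sm m ∈ 𝒜 := fun m => hfin.mem_toFinset.mp (eqv.symm m).2
  have hcover : ∀ S ∈ 𝒜, ∃ m, Sm m = S := by
    intro S hS
    refine ⟨eqv ⟨S, hfin.mem_toFinset.mpr hS⟩, ?_⟩
    show ((eqv.symm (eqv _)).1 : Set I) = S
    rw [Equiv.symm_apply_apply]
  let U : Fin n → Ultrafilter I := fun m => ultraOf f (Sm m) (hUlt _ (hSm𝒜 m))
  refine ⟨n, U, ?_, ?_⟩
  · -- completeness
    intro m 𝒮 h𝒮card h𝒮mem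
    show NullS f (Sm m \ ⋂₀ 𝒮)
    have hle : Cardinal.mk ↥((fun T => Sm m \ T) '' 𝒮) ≤ Cardinal.mk k :=
      Cardinal.mk_image_le.trans (Order.lt_succ_iff.mp h𝒮card)
    refine nullS_mono ?_ (null_sUnion hf hB _ ?_ hle)
    · intro i hi
      obtain ⟨hiS, hni⟩ := hi
      rw [Set.mem_sInter] at hni
      push_neg at hni
      obtain ⟨T, hT𝒮, hiT⟩ := hni
      exact ⟨Sm m \ T, ⟨T, hT𝒮, rfl⟩, hiS, hiT⟩
    · rintro T' ⟨T, hT, rfl⟩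
      exact (h𝒮mem T hT : NullS f (Sm m \ T))
  · -- factorization
    have hft : Function.FactorsThrough
        (fun a => (Submodule.Quotient.mk (f a) : B ⧸ totalAnnihilator k B))
        (fun (a : ∀ i, A i) (m : Fin n) => reducedMk (U m : Filter I) A a) := by
      intro a b hab
      have hm : ∀ m, {i | a i = b i} ∈ (U m : Filter I) := by
        intro m
        exact Quotient.exact (congrFun hab m)
      show (Submodule.Quotient.mk (f a) : B ⧸ totalAnnihilator k B)
          = Submodule.Quotient.mk (f b)
      rw [Submodule.Quotient.eq, ← map_sub]
      set E := {i | a i = b i} with hE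
      have hWnull : NullS f ((⋃₀ 𝒜)ᶜ ∪ ⋃₀ (Set.range fun m => Sm m \ E)) := by
        refine hcompl.union (null_finite_sUnion _ (Set.finite_range _) ?_)
        rintro T ⟨m, rfl⟩
        exact (hm m : NullS f (Sm m \ E))
      apply hWnull
      intro i hi
      simp only [Set.mem_union, not_or] at hi
      obtain ⟨hi1, hi2⟩ := hi
      obtain ⟨S, hS𝒜, hiS⟩ := not_not.mp hi1
      obtain ⟨m, rfl⟩ := hcover S hS𝒜
      have hiE : i ∈ E := by
        by_contra hiE
        exact hi2 ⟨Sm m \ E, ⟨m, rfl⟩, hiS, hiE⟩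
      show a i - b i = 0
      rw [show a i = b i from hiE, sub_self]
    refine ⟨Function.extend
      (fun (a : ∀ i, A i) (m : Fin n) => reducedMk (U m : Filter I) A a)
      (fun a => Submodule.Quotient.mk (f a)) (fun _ => 0), ?_⟩
    funext a
    exact (hft.extend_apply _ a).symm
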